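/- If the language L is based on a finite set of atoms (and finitely many modalities), then on a modal space X where modal equivalence coincides with bisimilarity, there is a weighted-sum metric d_w ∈ D_X that is topologically equivalent to the n-bisimulation metric; consequently the n-bisimulation topology equals the Stone topology. -/

import Mathlib

/-- Modal formulas over atoms `Φ` and agents `I`. -/
inductive Form (Φ I : Type) : Type
  | top : Form Φ I
  | atom : Φ → Form Φ I
  | neg : Form Φ I → Form Φ I
  | and : Form Φ I → Form Φ I → Form Φ I
  | box : I → Form Φ I → Form Φ I

/-- A Kripke model: worlds, accessibility per agent, valuation. -/
structure KripkeModel (Φ I : Type) where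
  W : Type
  R : I → W → W → Prop
  V : Φ → W → Prop

/-- Satisfaction of a formula at a world. -/
def KripkeModel.sat {Φ I : Type} (M : KripkeModel Φ I) : M.W → Form Φ I → Prop
  | _, Form.top => True
  | w, Form.atom p => M.V p w
  | w, Form.neg φ => ¬ M.sat w φ
  | w, Form.and φ ψ => M.sat w φ ∧ M.sat w ψ
  | w, Form.box i φ => ∀ v, M.R i w v → M.sat v φ

/-- A pointed Kripke model. -/
structure PointedModel (Φ I : Type) where
  M : KripkeModel Φ I
  s : M.W

def PointedModel.sat {Φ I : Type} (x : PointedModel Φ I) (φ : Form Φ I) : Prop :=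
  x.M.sat x.s φ

/-- Modal equivalence: satisfying the same formulas. -/
def modEquiv {Φ I : Type} (x y : PointedModel Φ I) : Prop :=
  ∀ φ : Form Φ I, x.sat φ ↔ y.sat φ

/-- `n`-bisimilarity of pointed models. -/
def nBisim {Φ I : Type} : ℕ → PointedModel Φ I → PointedModel Φ I → Prop
  | 0, x, y => ∀ p, x.M.V p x.s ↔ y.M.V p y.s
  | n+1, x, y => (∀ p, x.M.V p x.s ↔ y.M.V p y.s) ∧
      (∀ i t, x.M.R i x.s t → ∃ u, y.M.R i y.s u ∧ nBisim n ⟨x.M, t⟩ ⟨y.M, u⟩) ∧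
      (∀ i u, y.M.R i y.s u → ∃ t, x.M.R i x.s t ∧ nBisim n ⟨x.M, t⟩ ⟨y.M, u⟩)

/-- (Full) bisimilarity of pointed models. -/
def Bisimilar {Φ I : Type} (x y : PointedModel Φ I) : Prop :=
  ∃ Z : x.M.W → y.M.W → Prop, Z x.s y.s ∧
    (∀ s t, Z s t → ∀ p, x.M.V p s ↔ y.M.V p t) ∧
    (∀ s t, Z s t → ∀ i s', x.M.R i s s' → ∃ t', y.M.R i t t' ∧ Z s' t') ∧
    (∀ s t, Z s t → ∀ i t', y.M.R i t t' → ∃ s', x.M.R i s s' ∧ Z s' t')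

/-- The modal space over `X`: the quotient of `X` by modal equivalence. -/
def MSpace {Φ I : Type} (X : Set (PointedModel Φ I)) : Type 1 :=
  Quot (fun x y : X => modEquiv x.1 y.1)

/-- Satisfaction on the modal space (well-defined on equivalence classes). -/
def satQ {Φ I : Type} {X : Set (PointedModel Φ I)} (φ : Form Φ I) : MSpace X → Prop :=
  Quot.lift (fun x : X => x.1.sat φ) (fun _ _ h => propext (h φ))

/-- The basic opens of the Stone topology: `U_φ = {x : x ⊨ φ}`. -/
def stoneBasis {Φ I : Type} (X : Set (PointedModel Φ I)) : Set (Set (MSpace X)) :=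
  {S | ∃ φ : Form Φ I, S = {a : MSpace X | satQ φ a}}

/-- The Stone topology on a modal space. -/
def stoneTop {Φ I : Type} (X : Set (PointedModel Φ I)) : TopologicalSpace (MSpace X) :=
  TopologicalSpace.generateFrom (stoneBasis X)

/-- The metric topology of a distance function, generated by its open balls. -/
def ballTop {α : Type 1} (d : α → α → ℝ) : TopologicalSpace α :=
  TopologicalSpace.generateFrom
    {S | ∃ (a : α) (ε : ℝ), 0 < ε ∧ S = {b : α | d a b < ε}}

open scoped Classical

section Aux
variable {Φ I : Type}

theorem nBisim_refl : ∀ (n : ℕ) (x : PointedModel Φ I), nBisim n x x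
  | 0, x => fun p => Iff.rfl
  | n+1, x => ⟨fun p => Iff.rfl,
      fun i t ht => ⟨t, ht, nBisim_refl n _⟩,
      fun i u hu => ⟨u, hu, nBisim_refl n _⟩⟩

theorem nBisim_symm : ∀ (n : ℕ) {x y : PointedModel Φ I}, nBisim n x y → nBisim n y x
  | 0, x, y, h => fun p => (h p).symm
  | n+1, x, y, h => ⟨fun p => (h.1 p).symm,
      fun i t ht => let ⟨u, hu, hb⟩ := h.2.2 i t ht; ⟨u, hu, nBisim_symm n hb⟩,
      fun i u hu => let ⟨t, ht, hb⟩ := h.2.1 i u hu; ⟨t, ht, nBisim_symm n hb⟩⟩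

theorem nBisim_trans : ∀ (n : ℕ) {x y z : PointedModel Φ I},
    nBisim n x y → nBisim n y z → nBisim n x z
  | 0, x, y, z, h1, h2 => fun p => (h1 p).trans (h2 p)
  | n+1, x, y, z, h1, h2 => ⟨fun p => (h1.1 p).trans (h2.1 p),
      fun i t ht =>
        let ⟨u, hu, hb⟩ := h1.2.1 i t ht
        let ⟨v, hv, hb'⟩ := h2.2.1 i u hu
        ⟨v, hv, nBisim_trans n hb hb'⟩,
      fun i v hv =>
        let ⟨u, hu, hb'⟩ := h2.2.2 i v hv
        let ⟨t, ht, hb⟩ := h1.2.2 i u hu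
        ⟨t, ht, nBisim_trans n hb hb'⟩⟩

theorem nBisim_succ : ∀ (n : ℕ) {x y : PointedModel Φ I}, nBisim (n+1) x y → nBisim n x y
  | 0, x, y, h => h.1
  | n+1, x, y, h => ⟨h.1,
      fun i t ht => let ⟨u, hu, hb⟩ := h.2.1 i t ht; ⟨u, hu, nBisim_succ n hb⟩,
      fun i u hu => let ⟨t, ht, hb⟩ := h.2.2 i u hu; ⟨t, ht, nBisim_succ n hb⟩⟩

theorem nBisim_mono {n k : ℕ} (hkn : k ≤ n) {x y : PointedModel Φ I}
    (h : nBisim n x y) : nBisim k x y := by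
  induction n with
  | zero => exact Nat.le_zero.mp hkn ▸ h
  | succ n ih =>
    rcases Nat.lt_or_ge k (n+1) with hk | hk
    · exact ih (Nat.lt_succ_iff.mp hk) (nBisim_succ n h)
    · exact (Nat.le_antisymm hkn hk) ▸ h

/-- Modal depth. -/
def Form.depth : Form Φ I → ℕ
  | Form.top => 0
  | Form.atom _ => 0
  | Form.neg φ => φ.depth
  | Form.and φ ψ => max φ.depth ψ.depth
  | Form.box _ φ => φ.depth + 1

theorem sat_of_nBisim : ∀ (φ : Form Φ I) (n : ℕ), φ.depth ≤ n →
    ∀ {x y : PointedModel Φ I}, nBisim n x y → (x.sat φ ↔ y.sat φ)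
  | Form.top, n, _, x, y, _ => Iff.rfl
  | Form.atom p, n, _, x, y, h => by
      cases n with
      | zero => exact h p
      | succ n => exact h.1 p
  | Form.neg φ, n, hd, x, y, h => by
      have := sat_of_nBisim φ n hd h
      simp only [PointedModel.sat, KripkeModel.sat] at this ⊢
      exact not_congr this
  | Form.and φ ψ, n, hd, x, y, h => by
      have h1 := sat_of_nBisim φ n (le_trans (le_max_left _ _) hd) h
      have h2 := sat_of_nBisim ψ n (le_trans (le_max_right _ _) hd) h
      simp only [PointedModel.sat, KripkeModel.sat] at h1 h2 ⊢
      exact and_congr h1 h2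
  | Form.box i φ, n, hd, x, y, h => by
      cases n with
      | zero => exact absurd hd (by simp [Form.depth])
      | succ n =>
        have hφ : φ.depth ≤ n := Nat.succ_le_succ_iff.mp hd
        simp only [PointedModel.sat, KripkeModel.sat]
        constructor
        · intro hx u hu
          obtain ⟨t, ht, hb⟩ := h.2.2 i u hu
          exact (sat_of_nBisim φ n hφ hb).mp (hx t ht)
        · intro hy t ht
          obtain ⟨u, hu, hb⟩ := h.2.1 i t ht
          exact (sat_of_nBisim φ n hφ hb).mpr (hy u hu)

end Aux
section CharForm
open Classical
variable {Φ I : Type}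

noncomputable def pb (P : Prop) : Bool := if P then true else false

theorem pb_iff {P : Prop} : pb P = true ↔ P := by
  by_cases h : P <;> simp [pb, h]

theorem pb_eq_pb {P Q : Prop} : pb P = pb Q ↔ (P ↔ Q) := by
  by_cases hP : P <;> by_cases hQ : Q <;> simp [pb, hP, hQ]

/-- Finite conjunction. -/
def conj : List (Form Φ I) → Form Φ I
  | [] => Form.top
  | φ :: l => Form.and φ (conj l)

theorem sat_conj (x : PointedModel Φ I) : ∀ (l : List (Form Φ I)),
    x.sat (conj l) ↔ ∀ φ ∈ l, x.sat φ
  | [] => by simp [conj, PointedModel.sat, KripkeModel.sat]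
  | φ :: l => by
      simp only [conj, List.mem_cons]
      have := sat_conj x l
      simp only [PointedModel.sat, KripkeModel.sat] at this ⊢
      constructor
      · rintro ⟨h1, h2⟩ ψ (rfl | hψ)
        · exact h1
        · exact this.mp h2 ψ hψ
      · intro h
        exact ⟨h φ (Or.inl rfl), this.mpr fun ψ hψ => h ψ (Or.inr hψ)⟩

/-- Finite disjunction. -/
def disj (l : List (Form Φ I)) : Form Φ I := Form.neg (conj (l.map Form.neg))

theorem sat_disj (x : PointedModel Φ I) (l : List (Form Φ I)) :
    x.sat (disj l) ↔ ∃ φ ∈ l, x.sat φ := by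
  simp only [disj]
  show ¬ x.sat (conj (l.map Form.neg)) ↔ _
  rw [sat_conj]
  simp only [List.mem_map]
  constructor
  · intro h
    by_contra hc
    push_neg at hc
    exact h fun ψ ⟨φ, hφ, hψ⟩ => hψ ▸ (fun hs => hc φ hφ hs)
  · rintro ⟨φ, hφ, hs⟩ h
    exact h (Form.neg φ) ⟨φ, hφ, rfl⟩ hs

end CharForm

section Theories
variable (m j : ℕ)

/-- Finite approximants of theories. -/
def Th : ℕ → Type
  | 0 => Fin m → Bool
  | n+1 => (Fin m → Bool) × (Fin j → Th n → Bool)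

noncomputable def ThInst : ∀ n, Fintype (Th m j n) × DecidableEq (Th m j n)
  | 0 => ⟨inferInstanceAs (Fintype (Fin m → Bool)), inferInstanceAs (DecidableEq (Fin m → Bool))⟩
  | n+1 =>
      letI := (ThInst n).1
      letI := (ThInst n).2
      ⟨inferInstanceAs (Fintype ((Fin m → Bool) × (Fin j → Th m j n → Bool))),
       inferInstanceAs (DecidableEq ((Fin m → Bool) × (Fin j → Th m j n → Bool)))⟩

noncomputable instance thFintype (n : ℕ) : Fintype (Th m j n) := (ThInst m j n).1
noncomputable instance thDecEq (n : ℕ) : DecidableEq (Th m j n) := (ThInst m j n).2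

/-- The `n`-theory of a pointed model. -/
noncomputable def th : ∀ n : ℕ, PointedModel (Fin m) (Fin j) → Th m j n
  | 0, x => fun p => pb (x.M.V p x.s)
  | n+1, x => (fun p => pb (x.M.V p x.s),
      fun i τ => pb (∃ t, x.M.R i x.s t ∧ th n ⟨x.M, t⟩ = τ))

theorem th_eq_iff : ∀ (n : ℕ) (x y : PointedModel (Fin m) (Fin j)),
    th m j n x = th m j n y ↔ nBisim n x y
  | 0, x, y => by
      constructor
      · intro h p
        exact pb_eq_pb.mp (congrFun h p)
      · intro h
        exact funext fun p => pb_eq_pb.mpr (h p)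
  | n+1, x, y => by
      constructor
      · intro h
        have h1 := congrArg Prod.fst h
        have h2 := congrArg Prod.snd h
        simp only [th] at h1 h2
        refine ⟨fun p => pb_eq_pb.mp (congrFun h1 p), ?_, ?_⟩
        · intro i t ht
          have := pb_eq_pb.mp (congrFun (congrFun h2 i) (th m j n ⟨x.M, t⟩))
          obtain ⟨u, hu, hth⟩ := this.mp ⟨t, ht, rfl⟩
          exact ⟨u, hu, (th_eq_iff n _ _).mp hth.symm⟩
        · intro i u hu
          have := pb_eq_pb.mp (congrFun (congrFun h2 i) (th m j n ⟨y.M, u⟩))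
          obtain ⟨t, ht, hth⟩ := this.mpr ⟨u, hu, rfl⟩
          exact ⟨t, ht, (th_eq_iff n _ _).mp hth⟩
      · intro h
        simp only [th]
        refine Prod.ext (funext fun p => pb_eq_pb.mpr (h.1 p)) (funext fun i => funext fun τ => pb_eq_pb.mpr ?_)
        constructor
        · rintro ⟨t, ht, rfl⟩
          obtain ⟨u, hu, hb⟩ := h.2.1 i t ht
          exact ⟨u, hu, ((th_eq_iff n _ _).mpr hb).symm⟩
        · rintro ⟨u, hu, rfl⟩
          obtain ⟨t, ht, hb⟩ := h.2.2 i u hu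
          exact ⟨t, ht, (th_eq_iff n _ _).mpr hb⟩

end Theories
section FormOfTheory
variable (m j : ℕ)

theorem pb_eq_iff {P : Prop} {b : Bool} : pb P = b ↔ (P ↔ b = true) := by
  cases b
  · by_cases h : P <;> simp [pb, h]
  · by_cases h : P <;> simp [pb, h]

theorem sat_dia {Φ I : Type} (x : PointedModel Φ I) (i : I) (ψ : Form Φ I) :
    x.sat (Form.neg (Form.box i (Form.neg ψ))) ↔
      ∃ t, x.M.R i x.s t ∧ PointedModel.sat ⟨x.M, t⟩ ψ := by
  show ¬ (∀ t, x.M.R i x.s t → ¬ x.M.sat t ψ) ↔ _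
  push_neg
  exact Iff.rfl

theorem sat_box' {Φ I : Type} (x : PointedModel Φ I) (i : I) (ψ : Form Φ I) :
    x.sat (Form.box i ψ) ↔ ∀ t, x.M.R i x.s t → PointedModel.sat ⟨x.M, t⟩ ψ := Iff.rfl

noncomputable def allTh (n : ℕ) : List (Th m j n) := (Finset.univ : Finset (Th m j n)).toList

theorem mem_allTh {n : ℕ} (σ : Th m j n) : σ ∈ allTh m j n := by
  simp [allTh]

/-- The characteristic formula of a theory. -/
noncomputable def form : ∀ n : ℕ, Th m j n → Form (Fin m) (Fin j)
  | 0, τ => conj ((List.finRange m).map fun p =>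
      if τ p = true then Form.atom p else Form.neg (Form.atom p))
  | n+1, τ => Form.and (form 0 τ.1)
      (conj ((List.finRange j).map fun i =>
        Form.and
          (conj (((allTh m j n).filter fun σ => τ.2 i σ = true).map
            fun σ => Form.neg (Form.box i (Form.neg (form n σ)))))
          (Form.box i (disj (((allTh m j n).filter fun σ => τ.2 i σ = true).map
            fun σ => form n σ)))))

theorem sat_form : ∀ (n : ℕ) (τ : Th m j n) (x : PointedModel (Fin m) (Fin j)),
    x.sat (form m j n τ) ↔ th m j n x = τ
  | 0, τ, x => by
      rw [form, sat_conj]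
      simp only [List.forall_mem_map, List.mem_finRange, true_implies]
      constructor
      · intro h
        funext p
        have hp := h p
        show pb (x.M.V p x.s) = τ p
        rw [pb_eq_iff]
        by_cases hb : τ p = true
        · rw [if_pos hb] at hp
          rw [hb]
          exact ⟨fun _ => rfl, fun _ => hp⟩
        · rw [if_neg hb] at hp
          rw [Bool.not_eq_true] at hb
          rw [hb]
          constructor
          · intro hv; exact absurd hv hp
          · simp
      · intro h p
        have hpb : pb (x.M.V p x.s) = τ p := congrFun h p
        rw [pb_eq_iff] at hpb
        by_cases hb : τ p = true
        · rw [if_pos hb]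
          exact hpb.mpr hb
        · rw [if_neg hb]
          intro hv
          exact hb (hpb.mp hv)
  | n+1, τ, x => by
      have hand : ∀ (φ ψ : Form (Fin m) (Fin j)),
          x.sat (Form.and φ ψ) ↔ x.sat φ ∧ x.sat ψ := fun _ _ => Iff.rfl
      rw [form, hand, sat_form 0 τ.1 x, sat_conj]
      simp only [List.forall_mem_map, List.mem_finRange, true_implies]
      have hth : th m j (n+1) x = τ ↔
          (th m j 0 x = τ.1 ∧ ∀ i, (fun σ => pb (∃ t, x.M.R i x.s t ∧ th m j n ⟨x.M, t⟩ = σ)) = τ.2 i) := by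
        show @Eq ((Fin m → Bool) × (Fin j → Th m j n → Bool)) (th m j 0 x,
          fun i σ => pb (∃ t, x.M.R i x.s t ∧ th m j n ⟨x.M, t⟩ = σ)) τ ↔ _
        refine Prod.ext_iff.trans ?_
        constructor
        · rintro ⟨h1, h2⟩; exact ⟨h1, fun i => congrFun h2 i⟩
        · rintro ⟨h1, h2⟩; exact ⟨h1, funext h2⟩
      rw [hth]
      apply and_congr Iff.rfl
      apply forall_congr'
      intro i
      rw [hand, sat_conj]
      simp only [List.forall_mem_map]
      constructor
      · rintro ⟨h1, h2⟩
        funext σ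
        rw [pb_eq_iff]
        constructor
        · rintro ⟨t, ht, rfl⟩
          have hd := (sat_box' x i _).mp h2 t ht
          rw [sat_disj] at hd
          obtain ⟨φ, hφ, hsat⟩ := hd
          rw [List.mem_map] at hφ
          obtain ⟨σ', hσ', rfl⟩ := hφ
          rw [List.mem_filter] at hσ'
          rw [sat_form n σ' _] at hsat
          rw [hsat]
          exact of_decide_eq_true hσ'.2
        · intro hσ
          have hmem : σ ∈ (allTh m j n).filter fun σ => τ.2 i σ = true := by
            rw [List.mem_filter]
            exact ⟨mem_allTh m j σ, decide_eq_true hσ⟩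
          have := h1 σ hmem
          rw [sat_dia] at this
          obtain ⟨t, ht, hs⟩ := this
          exact ⟨t, ht, (sat_form n σ _).mp hs⟩
      · intro h
        have hfun : ∀ σ, (∃ t, x.M.R i x.s t ∧ th m j n ⟨x.M, t⟩ = σ) ↔ τ.2 i σ = true :=
          fun σ => pb_eq_iff.mp (congrFun h σ)
        constructor
        · intro σ hσmem
          rw [List.mem_filter] at hσmem
          obtain ⟨t, ht, hth'⟩ := (hfun σ).mpr (of_decide_eq_true hσmem.2)
          rw [sat_dia]
          exact ⟨t, ht, (sat_form n σ _).mpr hth'⟩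
        · rw [sat_box']
          intro t ht
          rw [sat_disj]
          refine ⟨form m j n (th m j n ⟨x.M, t⟩), ?_, (sat_form n _ _).mpr rfl⟩
          rw [List.mem_map]
          refine ⟨th m j n ⟨x.M, t⟩, ?_, rfl⟩
          rw [List.mem_filter]
          exact ⟨mem_allTh m j _, decide_eq_true ((hfun _).mp ⟨t, ht, rfl⟩)⟩

/-- Characteristic formula of a pointed model at depth `n`. -/
noncomputable def chi (n : ℕ) (x : PointedModel (Fin m) (Fin j)) : Form (Fin m) (Fin j) :=
  form m j n (th m j n x)

theorem sat_chi {n : ℕ} {x y : PointedModel (Fin m) (Fin j)} :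
    y.sat (chi m j n x) ↔ nBisim n x y := by
  rw [chi, sat_form, ← th_eq_iff]
  exact eq_comm

end FormOfTheory
section Enum
variable {m j : ℕ}

/-- Gödel numbering of formulas. -/
def code : Form (Fin m) (Fin j) → ℕ
  | Form.top => 0
  | Form.atom p => 5 * p.val + 1
  | Form.neg φ => 5 * code φ + 2
  | Form.and φ ψ => 5 * Nat.pair (code φ) (code ψ) + 3
  | Form.box i φ => 5 * Nat.pair i.val (code φ) + 4

theorem code_inj : Function.Injective (@code m j) := by
  intro φ ψ h
  induction φ generalizing ψ with
  | top => cases ψ <;> simp only [code] at h <;> first | rfl | omega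
  | atom p =>
      cases ψ <;> simp only [code] at h <;> try omega
      case atom q => exact congrArg Form.atom (Fin.ext (by omega))
  | neg φ ih =>
      cases ψ <;> simp only [code] at h <;> try omega
      case neg ψ' => exact congrArg Form.neg (ih (by omega))
  | and φ1 φ2 ih1 ih2 =>
      cases ψ <;> simp only [code] at h <;> try omega
      case and ψ1 ψ2 =>
        have hp : Nat.pair (code φ1) (code φ2) = Nat.pair (code ψ1) (code ψ2) := by omega
        rw [Nat.pair_eq_pair] at hp
        rw [ih1 hp.1, ih2 hp.2]
  | box i φ ih =>
      cases ψ <;> simp only [code] at h <;> try omega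
      case box i' ψ' =>
        have hp : Nat.pair i.val (code φ) = Nat.pair i'.val (code ψ') := by omega
        rw [Nat.pair_eq_pair] at hp
        rw [ih hp.2]
        exact congrArg (fun k => Form.box k _) (Fin.ext hp.1)

instance : Nonempty (Form (Fin m) (Fin j)) := ⟨Form.top⟩

noncomputable def enum (m j : ℕ) : ℕ → Form (Fin m) (Fin j) :=
  Function.invFun (@code m j)

theorem enum_surj : Function.Surjective (enum m j) :=
  Function.invFun_surjective code_inj

end Enum
section DBlemmas
variable {m j : ℕ} {X : Set (PointedModel (Fin m) (Fin j))} {dB : MSpace X → MSpace X → ℝ}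

theorem dB_cases
    (hzero : ∀ x y : X, (∀ n : ℕ, nBisim n x.1 y.1) → dB (Quot.mk _ x) (Quot.mk _ y) = 0)
    (hleast : ∀ (x y : X) (n : ℕ), ¬ nBisim n x.1 y.1 → (∀ k < n, nBisim k x.1 y.1) →
      dB (Quot.mk _ x) (Quot.mk _ y) = (1 / 2) ^ n)
    (x y : X) :
    (dB (Quot.mk _ x) (Quot.mk _ y) = 0 ∧ ∀ n, nBisim n x.1 y.1) ∨
      ∃ N, dB (Quot.mk _ x) (Quot.mk _ y) = (1/2)^N ∧ ¬ nBisim N x.1 y.1 ∧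
        ∀ k < N, nBisim k x.1 y.1 := by
  by_cases hall : ∀ n, nBisim n x.1 y.1
  · exact Or.inl ⟨hzero x y hall, hall⟩
  · push_neg at hall
    have hmin : ∀ k < Nat.find hall, nBisim k x.1 y.1 :=
      fun k hk => not_not.mp (Nat.find_min hall hk)
    exact Or.inr ⟨Nat.find hall, hleast x y _ (Nat.find_spec hall) hmin,
      Nat.find_spec hall, hmin⟩

variable
    (hzero : ∀ x y : X, (∀ n : ℕ, nBisim n x.1 y.1) → dB (Quot.mk _ x) (Quot.mk _ y) = 0)
    (hleast : ∀ (x y : X) (n : ℕ), ¬ nBisim n x.1 y.1 → (∀ k < n, nBisim k x.1 y.1) →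
      dB (Quot.mk _ x) (Quot.mk _ y) = (1 / 2) ^ n)

include hzero hleast

theorem dB_nonneg (x y : X) : 0 ≤ dB (Quot.mk _ x) (Quot.mk _ y) := by
  rcases dB_cases hzero hleast x y with ⟨h, _⟩ | ⟨N, h, _, _⟩ <;> rw [h]
  positivity

theorem dB_lt_iff (x y : X) (n : ℕ) :
    dB (Quot.mk _ x) (Quot.mk _ y) < (1/2)^n ↔ nBisim n x.1 y.1 := by
  rcases dB_cases hzero hleast x y with ⟨h, hall⟩ | ⟨N, h, hN, hmin⟩ <;> rw [h]
  · constructor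
    · intro _; exact hall n
    · intro _; positivity
  · constructor
    · intro hlt
      have hNn : n < N := by
        by_contra hc
        push_neg at hc
        have hle : (1/2:ℝ)^n ≤ (1/2)^N :=
          pow_le_pow_of_le_one (by norm_num) (by norm_num) hc
        linarith
      exact hmin n hNn
    · intro hb
      have hNn : n < N := by
        by_contra hc
        push_neg at hc
        exact hN (nBisim_mono hc hb)
      have h1 : (1/2:ℝ)^N ≤ (1/2)^(n+1) :=
        pow_le_pow_of_le_one (by norm_num) (by norm_num) hNn
      have h2 : (1/2:ℝ)^(n+1) < (1/2)^n := by
        rw [pow_succ]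
        nlinarith [pow_pos (show (0:ℝ) < 1/2 by norm_num) n]
      linarith

theorem dB_self (x : X) : dB (Quot.mk _ x) (Quot.mk _ x) = 0 :=
  hzero x x fun n => nBisim_refl n _

theorem dB_ge (x y : X) (n : ℕ) (h : ¬ nBisim n x.1 y.1) :
    (1/2:ℝ)^n ≤ dB (Quot.mk _ x) (Quot.mk _ y) :=
  not_lt.mp fun hlt => h ((dB_lt_iff hzero hleast x y n).mp hlt)

theorem dB_ultra (x y z : X) {ε : ℝ}
    (h1 : dB (Quot.mk _ x) (Quot.mk _ z) < ε) (h2 : dB (Quot.mk _ z) (Quot.mk _ y) < ε) :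
    dB (Quot.mk _ x) (Quot.mk _ y) < ε := by
  by_contra hc
  push_neg at hc
  rcases dB_cases hzero hleast x y with ⟨h0, _⟩ | ⟨N, hval, hN, _⟩
  · rw [h0] at hc
    have := dB_nonneg hzero hleast x z
    linarith
  · rw [hval] at hc
    have : ¬ (nBisim N x.1 z.1 ∧ nBisim N z.1 y.1) :=
      fun ⟨ha, hb⟩ => hN (nBisim_trans N ha hb)
    rcases not_and_or.mp this with h | h
    · have := dB_ge hzero hleast x z N h
      linarith
    · have := dB_ge hzero hleast z y N h
      linarith

end DBlemmas
section Dmetric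
variable {m j : ℕ} {X : Set (PointedModel (Fin m) (Fin j))}

noncomputable def wgt (k : ℕ) : ℝ := (1/2)^(k+1)

theorem wgt_pos (k : ℕ) : 0 < wgt k := by
  rw [wgt]; positivity

theorem wgt_summable : Summable wgt := by
  have h : Summable (fun k : ℕ => (1/2:ℝ)^k * (1/2)) := summable_geometric_two.mul_right _
  apply h.congr
  intro k
  rw [wgt, pow_succ]

noncomputable def trm (a b : MSpace X) (k : ℕ) : ℝ :=
  if (satQ (enum m j k) a ↔ satQ (enum m j k) b) then 0 else wgt k

theorem trm_nonneg (a b : MSpace X) (k : ℕ) : 0 ≤ trm a b k := by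
  rw [trm]; split
  · exact le_refl 0
  · exact le_of_lt (wgt_pos k)

theorem trm_le (a b : MSpace X) (k : ℕ) : trm a b k ≤ wgt k := by
  rw [trm]; split
  · exact le_of_lt (wgt_pos k)
  · exact le_refl _

theorem trm_summable (a b : MSpace X) : Summable (trm a b) :=
  Summable.of_nonneg_of_le (trm_nonneg a b) (trm_le a b) wgt_summable

noncomputable def dW (a b : MSpace X) : ℝ := ∑' k, trm a b k

theorem dW_nonneg (a b : MSpace X) : 0 ≤ dW a b :=
  tsum_nonneg (trm_nonneg a b)

theorem dW_self (a : MSpace X) : dW a a = 0 := by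
  simp [dW, trm]

theorem dW_triangle (a b c : MSpace X) : dW a b ≤ dW a c + dW c b := by
  have hsum : Summable (fun k => trm a c k + trm c b k) :=
    (trm_summable a c).add (trm_summable c b)
  have hpt : ∀ k, trm a b k ≤ trm a c k + trm c b k := by
    intro k
    by_cases hab : (satQ (enum m j k) a ↔ satQ (enum m j k) b)
    · rw [trm, if_pos hab]
      exact add_nonneg (trm_nonneg a c k) (trm_nonneg c b k)
    · have hsplit : ¬ ((satQ (enum m j k) a ↔ satQ (enum m j k) c) ∧
          (satQ (enum m j k) c ↔ satQ (enum m j k) b)) :=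
        fun ⟨u, v⟩ => hab (u.trans v)
      rcases not_and_or.mp hsplit with h | h
      · calc trm a b k ≤ wgt k := trm_le _ _ _
          _ = trm a c k := by rw [trm, if_neg h]
          _ ≤ trm a c k + trm c b k := le_add_of_nonneg_right (trm_nonneg _ _ _)
      · calc trm a b k ≤ wgt k := trm_le _ _ _
          _ = trm c b k := by rw [trm, if_neg h]
          _ ≤ trm a c k + trm c b k := le_add_of_nonneg_left (trm_nonneg _ _ _)
  have := Summable.tsum_le_tsum hpt (trm_summable a b) hsum
  rw [Summable.tsum_add (trm_summable a c) (trm_summable c b)] at this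
  exact this

theorem dW_single (a b : MSpace X) (k : ℕ)
    (h : ¬ (satQ (enum m j k) a ↔ satQ (enum m j k) b)) : wgt k ≤ dW a b := by
  have : wgt k = trm a b k := by rw [trm, if_neg h]
  rw [this]
  exact Summable.le_tsum (trm_summable a b) k (fun i _ => trm_nonneg a b i)

theorem dW_tail (a b : MSpace X) (K : ℕ)
    (h : ∀ k < K, (satQ (enum m j k) a ↔ satQ (enum m j k) b)) :
    dW a b ≤ (1/2)^K := by
  have hg : Summable (fun k => if k < K then (0:ℝ) else wgt k) := by
    apply Summable.of_nonneg_of_le _ _ wgt_summable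
    · intro k; split
      · exact le_refl 0
      · exact le_of_lt (wgt_pos k)
    · intro k; split
      · exact le_of_lt (wgt_pos k)
      · exact le_refl _
  have hle : ∀ k, trm a b k ≤ (if k < K then (0:ℝ) else wgt k) := by
    intro k
    by_cases hk : k < K
    · rw [if_pos hk, trm, if_pos (h k hk)]
    · rw [if_neg hk]; exact trm_le _ _ _
  have h1 : dW a b ≤ ∑' k, (if k < K then (0:ℝ) else wgt k) :=
    Summable.tsum_le_tsum hle (trm_summable a b) hg
  have h2 : ∑' k, (if k < K then (0:ℝ) else wgt k) = (1/2:ℝ)^K := by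
    rw [← Summable.sum_add_tsum_nat_add K hg]
    have hz : (∑ i ∈ Finset.range K, (if i < K then (0:ℝ) else wgt i)) = 0 :=
      Finset.sum_eq_zero (fun i hi => if_pos (Finset.mem_range.mp hi))
    rw [hz, zero_add]
    have hc : ∀ i : ℕ, (if i + K < K then (0:ℝ) else wgt (i + K)) = (1/2)^(K+1) * (1/2)^i := by
      intro i
      rw [if_neg (by omega), wgt, show i + K + 1 = (K+1) + i by omega, pow_add]
    rw [tsum_congr hc, tsum_mul_left, tsum_geometric_two, pow_succ]
    ring
  linarith

end Dmetric
section TopHelpers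

theorem isOpen_gen {α : Type 1} {A : Set (Set α)} {U : Set α}
    (h : ∀ c ∈ U, ∃ V ∈ A, c ∈ V ∧ V ⊆ U) : TopologicalSpace.GenerateOpen A U := by
  have hU : U = ⋃₀ {V | V ∈ A ∧ V ⊆ U} := by
    ext c
    constructor
    · intro hc
      obtain ⟨V, hVA, hcV, hVU⟩ := h c hc
      exact ⟨V, ⟨hVA, hVU⟩, hcV⟩
    · rintro ⟨V, ⟨_, hVU⟩, hcV⟩
      exact hVU hcV
  rw [hU]
  exact .sUnion _ fun V hV => .basic V hV.1

theorem gen_eq {α : Type 1} {A B : Set (Set α)}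
    (hAB : ∀ U ∈ A, TopologicalSpace.GenerateOpen B U)
    (hBA : ∀ U ∈ B, TopologicalSpace.GenerateOpen A U) :
    TopologicalSpace.generateFrom A = TopologicalSpace.generateFrom B := by
  apply le_antisymm
  · exact le_generateFrom fun U hU => hBA U hU
  · exact le_generateFrom fun U hU => hAB U hU

end TopHelpers

theorem stmt_9' (m j : ℕ) (X : Set (PointedModel (Fin m) (Fin j)))
    (hcoincide : ∀ x ∈ X, ∀ y ∈ X, modEquiv x y ↔ Bisimilar x y)
    (dB : MSpace X → MSpace X → ℝ)
    (hzero : ∀ x y : X, (∀ n : ℕ, nBisim n x.1 y.1) →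
      dB (Quot.mk _ x) (Quot.mk _ y) = 0)
    (hleast : ∀ (x y : X) (n : ℕ), ¬ nBisim n x.1 y.1 → (∀ k < n, nBisim k x.1 y.1) →
      dB (Quot.mk _ x) (Quot.mk _ y) = (1 / 2) ^ n) :
    ∃ (e : ℕ → Form (Fin m) (Fin j)) (w : ℕ → ℝ) (d : MSpace X → MSpace X → ℝ),
      (∀ k, 0 < w k) ∧ Summable w ∧
      (∀ ψ : Form (Fin m) (Fin j), ∃ S ⊆ Set.range e,
        (∀ a : MSpace X, (∀ φ ∈ S, satQ φ a) → satQ ψ a) ∨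
        (∀ a : MSpace X, (∀ φ ∈ S, satQ φ a) → satQ (Form.neg ψ) a)) ∧
      (∀ a b : MSpace X,
        d a b = ∑' k : ℕ, if (satQ (e k) a ↔ satQ (e k) b) then (0 : ℝ) else w k) ∧
      ballTop d = ballTop dB ∧
      ballTop dB = stoneTop X := by
  refine ⟨enum m j, wgt, dW, fun k => wgt_pos k, wgt_summable, ?_, ?_, ?_, ?_⟩
  · -- determination of each formula by the enumerated family
    intro ψ
    obtain ⟨k, hk⟩ := enum_surj ψ
    refine ⟨{ψ}, Set.singleton_subset_iff.mpr ⟨k, hk⟩, Or.inl fun a h => h ψ rfl⟩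
  · -- the formula for d
    intro a b
    rw [dW]
    exact tsum_congr fun k => by rw [trm]
  · -- ballTop dW = ballTop dB
    rw [ballTop, ballTop]
    apply gen_eq
    · -- dW balls are open in the dB-topology
      rintro U ⟨a, ε, hε, rfl⟩
      apply isOpen_gen
      intro c hc
      obtain ⟨y, rfl⟩ := Quot.exists_rep c
      have hdac : dW a (Quot.mk _ y) < ε := hc
      obtain ⟨K, hK⟩ : ∃ K : ℕ, (1/2:ℝ)^K < ε - dW a (Quot.mk _ y) :=
        exists_pow_lt_of_lt_one (by linarith) (by norm_num)
      set n := (Finset.range K).sup (fun k => (enum m j k).depth) with hn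
      refine ⟨{b | dB (Quot.mk _ y) b < (1/2)^n},
        ⟨Quot.mk _ y, (1/2)^n, by positivity, rfl⟩, ?_, ?_⟩
      · show dB (Quot.mk _ y) (Quot.mk _ y) < (1/2:ℝ)^n
        rw [dB_self hzero hleast y]
        positivity
      · rintro b hb
        obtain ⟨z, rfl⟩ := Quot.exists_rep b
        have hyz : nBisim n y.1 z.1 := (dB_lt_iff hzero hleast y z n).mp hb
        have hagree : ∀ k < K,
            (satQ (enum m j k) (Quot.mk _ y) ↔ satQ (enum m j k) (Quot.mk _ z)) := by
          intro k hkK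
          have hdep : (enum m j k).depth ≤ n := Finset.le_sup (f := fun k => (enum m j k).depth) (Finset.mem_range.mpr hkK)
          exact sat_of_nBisim (enum m j k) n hdep hyz
        have h1 : dW (Quot.mk _ y) (Quot.mk _ z) ≤ (1/2:ℝ)^K := dW_tail _ _ K hagree
        have h2 := dW_triangle a (Quot.mk _ z) (Quot.mk _ y)
        show dW a (Quot.mk _ z) < ε
        linarith
    · -- dB balls are open in the dW-topology
      rintro U ⟨a, ε, hε, rfl⟩
      obtain ⟨x0, rfl⟩ := Quot.exists_rep a
      apply isOpen_gen
      intro c hc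
      obtain ⟨y, rfl⟩ := Quot.exists_rep c
      have hdac : dB (Quot.mk _ x0) (Quot.mk _ y) < ε := hc
      obtain ⟨n, hnε⟩ : ∃ n : ℕ, (1/2:ℝ)^n < ε :=
        exists_pow_lt_of_lt_one hε (by norm_num)
      obtain ⟨k₀, hk₀⟩ := enum_surj (chi m j n y.1)
      refine ⟨{b | dW (Quot.mk _ y) b < wgt k₀},
        ⟨Quot.mk _ y, wgt k₀, wgt_pos k₀, rfl⟩, ?_, ?_⟩
      · show dW (Quot.mk _ y) (Quot.mk _ y) < wgt k₀
        refine lt_of_eq_of_lt (dW_self _) ?_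
        exact wgt_pos k₀
      · rintro b hb
        obtain ⟨z, rfl⟩ := Quot.exists_rep b
        have hagree : (satQ (enum m j k₀) (Quot.mk _ y) ↔ satQ (enum m j k₀) (Quot.mk _ z)) := by
          by_contra hne
          exact absurd (show dW (Quot.mk _ y) (Quot.mk _ z) < wgt k₀ from hb)
            (not_lt.mpr (dW_single _ _ k₀ hne))
        rw [hk₀] at hagree
        have hsy : (y.1).sat (chi m j n y.1) := (sat_chi m j).mpr (nBisim_refl n y.1)
        have hsz : (z.1).sat (chi m j n y.1) := hagree.mp hsy
        have hyz : nBisim n y.1 z.1 := (sat_chi m j).mp hsz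
        have hby : dB (Quot.mk _ y) (Quot.mk _ z) < (1/2:ℝ)^n :=
          (dB_lt_iff hzero hleast y z n).mpr hyz
        show dB (Quot.mk _ x0) (Quot.mk _ z) < ε
        exact dB_ultra hzero hleast x0 z y hdac (lt_trans hby hnε)
  · -- ballTop dB = stoneTop X
    rw [ballTop, stoneTop]
    apply gen_eq
    · -- dB balls are Stone-open
      rintro U ⟨a, ε, hε, rfl⟩
      obtain ⟨x0, rfl⟩ := Quot.exists_rep a
      apply isOpen_gen
      intro c hc
      obtain ⟨y, rfl⟩ := Quot.exists_rep c
      have hdac : dB (Quot.mk _ x0) (Quot.mk _ y) < ε := hc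
      obtain ⟨n, hnε⟩ : ∃ n : ℕ, (1/2:ℝ)^n < ε :=
        exists_pow_lt_of_lt_one hε (by norm_num)
      refine ⟨{b | satQ (chi m j n y.1) b}, ⟨chi m j n y.1, rfl⟩, ?_, ?_⟩
      · show satQ (chi m j n y.1) (Quot.mk _ y)
        exact (sat_chi m j).mpr (nBisim_refl n y.1)
      · rintro b hb
        obtain ⟨z, rfl⟩ := Quot.exists_rep b
        have hyz : nBisim n y.1 z.1 := (sat_chi m j).mp hb
        have hby : dB (Quot.mk _ y) (Quot.mk _ z) < (1/2:ℝ)^n :=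
          (dB_lt_iff hzero hleast y z n).mpr hyz
        show dB (Quot.mk _ x0) (Quot.mk _ z) < ε
        exact dB_ultra hzero hleast x0 z y hdac (lt_trans hby hnε)
    · -- Stone basic sets are dB-open
      rintro U ⟨φ, rfl⟩
      apply isOpen_gen
      intro c hc
      obtain ⟨y, rfl⟩ := Quot.exists_rep c
      refine ⟨{b | dB (Quot.mk _ y) b < (1/2)^(φ.depth)},
        ⟨Quot.mk _ y, (1/2)^(φ.depth), by positivity, rfl⟩, ?_, ?_⟩
      · show dB (Quot.mk _ y) (Quot.mk _ y) < (1/2:ℝ)^(φ.depth)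
        rw [dB_self hzero hleast y]
        positivity
      · rintro b hb
        obtain ⟨z, rfl⟩ := Quot.exists_rep b
        have hyz : nBisim φ.depth y.1 z.1 := (dB_lt_iff hzero hleast y z _).mp hb
        show satQ φ (Quot.mk _ z)
        exact (sat_of_nBisim φ φ.depth le_rfl hyz).mp hc

/-- Over a language with finitely many atoms and finitely many modalities,
on a modal space where modal equivalence coincides with bisimilarity, there is a
weighted-sum metric `d` (from the family `D_X`) topologically equivalent to the
`n`-bisimulation metric `dB`; consequently the `n`-bisimulation topology is the
Stone topology. -/
theorem stmt_9 (m j : ℕ) (X : Set (PointedModel (Fin m) (Fin j)))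
    (hcoincide : ∀ x ∈ X, ∀ y ∈ X, modEquiv x y ↔ Bisimilar x y)
    (dB : MSpace X → MSpace X → ℝ)
    (hzero : ∀ x y : X, (∀ n : ℕ, nBisim n x.1 y.1) →
      dB (Quot.mk _ x) (Quot.mk _ y) = 0)
    (hleast : ∀ (x y : X) (n : ℕ), ¬ nBisim n x.1 y.1 → (∀ k < n, nBisim k x.1 y.1) →
      dB (Quot.mk _ x) (Quot.mk _ y) = (1 / 2) ^ n) :
    ∃ (e : ℕ → Form (Fin m) (Fin j)) (w : ℕ → ℝ) (d : MSpace X → MSpace X → ℝ),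
      (∀ k, 0 < w k) ∧ Summable w ∧
      (∀ ψ : Form (Fin m) (Fin j), ∃ S ⊆ Set.range e,
        (∀ a : MSpace X, (∀ φ ∈ S, satQ φ a) → satQ ψ a) ∨
        (∀ a : MSpace X, (∀ φ ∈ S, satQ φ a) → satQ (Form.neg ψ) a)) ∧
      (∀ a b : MSpace X,
        d a b = ∑' k : ℕ, if (satQ (e k) a ↔ satQ (e k) b) then (0 : ℝ) else w k) ∧
      ballTop d = ballTop dB ∧
      ballTop dB = stoneTop X := by
  exact stmt_9' m j X hcoincide dB hzero hleast
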